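/- In the square-root estimator setting, with Q(A) = √((1/n)Σ(Y_i − ⟨X_i,A⟩)²), if Â_SQ minimizes Q(A) + λ‖A‖₁ over {‖A‖_∞ ≤ a}, ‖A₀‖_∞ ≤ a, Q(A₀) > 0, and λ > 3‖Σ‖/Q(A₀), then ‖P_{A₀}^⊥(Δ)‖₁ ≤ 2‖P_{A₀}(Δ)‖₁ where Δ = Â_SQ − A₀. -/

import Mathlib

open Matrix
noncomputable def nuclearNorm {m₁ m₂ : ℕ} (A : Matrix (Fin m₁) (Fin m₂) ℝ) : ℝ :=
  ∑ i, Real.sqrt ((show (Aᵀ * A).IsHermitian by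
    simpa [Matrix.conjTranspose_eq_transpose_of_trivial] using
      Matrix.isHermitian_conjTranspose_mul_self A).eigenvalues i)

noncomputable def opNorm {m₁ m₂ : ℕ} (A : Matrix (Fin m₁) (Fin m₂) ℝ) : ℝ :=
  ‖LinearMap.toContinuousLinearMap (Matrix.toEuclideanLin A)‖

noncomputable def frobNorm {m₁ m₂ : ℕ} (A : Matrix (Fin m₁) (Fin m₂) ℝ) : ℝ :=
  Real.sqrt (∑ j, ∑ k, (A j k) ^ 2)

noncomputable def mip {m₁ m₂ : ℕ} (A B : Matrix (Fin m₁) (Fin m₂) ℝ) : ℝ :=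
  (Aᵀ * B).trace

open Finset

namespace ConeAux

/-! ### Euclidean helper -/

noncomputable def qs {m : ℕ} (x : Fin m → ℝ) : ℝ := ∑ i, (x i) ^ 2

lemma qs_nonneg {m : ℕ} (x : Fin m → ℝ) : 0 ≤ qs x :=
  Finset.sum_nonneg fun _ _ => sq_nonneg _

lemma dot_self_eq_qs {m : ℕ} (x : Fin m → ℝ) : x ⬝ᵥ x = qs x := by
  simp [dotProduct, qs, sq]

lemma dot_le {m : ℕ} (u w : Fin m → ℝ) :
    u ⬝ᵥ w ≤ Real.sqrt (qs u) * Real.sqrt (qs w) := by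
  have h := Finset.sum_mul_sq_le_sq_mul_sq Finset.univ u w
  have h2 : u ⬝ᵥ w ≤ Real.sqrt ((u ⬝ᵥ w) ^ 2) := by
    rw [Real.sqrt_sq_eq_abs]; exact le_abs_self _
  calc u ⬝ᵥ w ≤ Real.sqrt ((u ⬝ᵥ w) ^ 2) := h2
    _ ≤ Real.sqrt (qs u * qs w) := by
        apply Real.sqrt_le_sqrt
        simpa [dotProduct, qs] using h
    _ = Real.sqrt (qs u) * Real.sqrt (qs w) := Real.sqrt_mul (qs_nonneg u) _

/-! ### mip basics -/

variable {m₁ m₂ : ℕ}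

lemma mip_eq (A B : Matrix (Fin m₁) (Fin m₂) ℝ) :
    mip A B = ∑ j, ∑ k, A j k * B j k := by
  rw [mip, Matrix.trace]
  simp only [Matrix.diag_apply, Matrix.mul_apply, Matrix.transpose_apply]
  exact Finset.sum_comm

lemma mip_mul_left {m₃ : ℕ} (X : Matrix (Fin m₁) (Fin m₃) ℝ)
    (S : Matrix (Fin m₃) (Fin m₂) ℝ) (Y : Matrix (Fin m₁) (Fin m₂) ℝ) :
    mip (X * S) Y = mip S (Xᵀ * Y) := by
  rw [mip, mip, Matrix.transpose_mul, Matrix.mul_assoc]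

lemma mip_add_right (A B C : Matrix (Fin m₁) (Fin m₂) ℝ) :
    mip A (B + C) = mip A B + mip A C := by
  simp [mip_eq, mul_add, Finset.sum_add_distrib]

lemma mip_sub_right (A B C : Matrix (Fin m₁) (Fin m₂) ℝ) :
    mip A (B - C) = mip A B - mip A C := by
  simp [mip_eq, mul_sub, Finset.sum_sub_distrib]

lemma mip_neg_left (A B : Matrix (Fin m₁) (Fin m₂) ℝ) :
    mip (-A) B = - mip A B := by
  simp [mip_eq, Finset.sum_neg_distrib]

lemma mip_zero_right (A : Matrix (Fin m₁) (Fin m₂) ℝ) : mip A 0 = 0 := by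
  simp [mip_eq]

lemma mip_smul_left (c : ℝ) (A B : Matrix (Fin m₁) (Fin m₂) ℝ) :
    mip (c • A) B = c * mip A B := by
  simp [mip_eq, Finset.mul_sum, mul_assoc]

lemma mip_sum_left {ι : Type*} (s : Finset ι) (A : ι → Matrix (Fin m₁) (Fin m₂) ℝ)
    (B : Matrix (Fin m₁) (Fin m₂) ℝ) :
    mip (∑ i ∈ s, A i) B = ∑ i ∈ s, mip (A i) B := by
  induction s using Finset.cons_induction with
  | empty => simp [mip_eq]
  | cons a s ha ih =>
      rw [Finset.sum_cons, Finset.sum_cons, ← ih]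
      simp [mip_eq, add_mul, Finset.sum_add_distrib]

/-! ### opNorm -/

lemma qs_mulVec_le (A : Matrix (Fin m₁) (Fin m₂) ℝ) (x : Fin m₂ → ℝ) :
    Real.sqrt (qs (A *ᵥ x)) ≤ opNorm A * Real.sqrt (qs x) := by
  have h := (LinearMap.toContinuousLinearMap (Matrix.toEuclideanLin A)).le_opNorm
    ((WithLp.equiv 2 (Fin m₂ → ℝ)).symm x)
  have e1 : ‖(LinearMap.toContinuousLinearMap (Matrix.toEuclideanLin A))
      ((WithLp.equiv 2 (Fin m₂ → ℝ)).symm x)‖ = Real.sqrt (qs (A *ᵥ x)) := by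
    rw [LinearMap.coe_toContinuousLinearMap', WithLp.equiv_symm_apply,
      Matrix.toEuclideanLin_apply_piLp_toLp,
      EuclideanSpace.norm_eq]
    simp [qs, Real.norm_eq_abs, sq_abs]
  have e2 : ‖(WithLp.equiv 2 (Fin m₂ → ℝ)).symm x‖ = Real.sqrt (qs x) := by
    rw [EuclideanSpace.norm_eq]
    simp [qs, Real.norm_eq_abs, sq_abs]
  rw [e1, e2] at h
  exact h

lemma opNorm_nonneg (A : Matrix (Fin m₁) (Fin m₂) ℝ) : 0 ≤ opNorm A := norm_nonneg _

/-! ### spectral data of Mᴴ * M -/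

lemma hermT (M : Matrix (Fin m₁) (Fin m₂) ℝ) : (Mᵀ * M).IsHermitian := by
  simpa [Matrix.conjTranspose_eq_transpose_of_trivial] using
    Matrix.isHermitian_conjTranspose_mul_self M

noncomputable def vb (M : Matrix (Fin m₁) (Fin m₂) ℝ) (i : Fin m₂) : Fin m₂ → ℝ :=
  ((hermT M).eigenvectorBasis i : EuclideanSpace ℝ (Fin m₂))

noncomputable def ev (M : Matrix (Fin m₁) (Fin m₂) ℝ) (i : Fin m₂) : ℝ :=
  (hermT M).eigenvalues i

lemma vb_dot (M : Matrix (Fin m₁) (Fin m₂) ℝ) (i j : Fin m₂) :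
    vb M i ⬝ᵥ vb M j = if i = j then 1 else 0 := by
  have h := (hermT M).eigenvectorBasis.orthonormal
  rw [orthonormal_iff_ite] at h
  have := h i j
  rw [PiLp.inner_apply] at this
  simpa [dotProduct, vb, mul_comm] using this

lemma vb_mulVec (M : Matrix (Fin m₁) (Fin m₂) ℝ) (i : Fin m₂) :
    (Mᴴ * M) *ᵥ vb M i = ev M i • vb M i :=
  (hermT M).mulVec_eigenvectorBasis i

lemma ev_nonneg (M : Matrix (Fin m₁) (Fin m₂) ℝ) (i : Fin m₂) : 0 ≤ ev M i :=
  (Matrix.posSemidef_conjTranspose_mul_self M).eigenvalues_nonneg i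

lemma vb_expand (M : Matrix (Fin m₁) (Fin m₂) ℝ) (x : Fin m₂ → ℝ) :
    ∑ i, (vb M i ⬝ᵥ x) • vb M i = x := by
  have h := (hermT M).eigenvectorBasis.sum_repr'
    ((WithLp.equiv 2 (Fin m₂ → ℝ)).symm x)
  have h2 : ∀ i, (inner ℝ ((hermT M).eigenvectorBasis i)
      ((WithLp.equiv 2 (Fin m₂ → ℝ)).symm x) : ℝ) = vb M i ⬝ᵥ x := by
    intro i; rw [PiLp.inner_apply]; simp [dotProduct, vb, mul_comm]
  have h3 := congrArg (WithLp.linearEquiv 2 ℝ (Fin m₂ → ℝ)) h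
  rw [map_sum] at h3
  simp only [_root_.map_smul, h2] at h3
  funext k
  have := congrArg (fun z => z k) h3
  simpa [Finset.sum_apply, vb] using this

lemma transpose_eq_conjTranspose (M : Matrix (Fin m₁) (Fin m₂) ℝ) : Mᵀ = Mᴴ :=
  (Matrix.conjTranspose_eq_transpose_of_trivial M).symm

lemma qs_mulVec_eq (M : Matrix (Fin m₁) (Fin m₂) ℝ) (y : Fin m₂ → ℝ) :
    qs (M *ᵥ y) = y ⬝ᵥ ((Mᴴ * M) *ᵥ y) := by
  rw [← dot_self_eq_qs]
  conv_rhs => rw [← Matrix.mulVec_mulVec, Matrix.dotProduct_mulVec,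
    ← transpose_eq_conjTranspose M, Matrix.vecMul_transpose]

lemma qs_mulVec_vb (M : Matrix (Fin m₁) (Fin m₂) ℝ) (i : Fin m₂) :
    qs (M *ᵥ vb M i) = ev M i := by
  rw [qs_mulVec_eq, vb_mulVec, dotProduct_smul, smul_eq_mul, vb_dot]
  simp

lemma qs_vb (M : Matrix (Fin m₁) (Fin m₂) ℝ) (i : Fin m₂) : qs (vb M i) = 1 := by
  rw [← dot_self_eq_qs, vb_dot]; simp

lemma parseval (M : Matrix (Fin m₁) (Fin m₂) ℝ) (x : Fin m₂ → ℝ) :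
    ∑ i, (vb M i ⬝ᵥ x) ^ 2 = qs x := by
  have h : qs x = (∑ i, (vb M i ⬝ᵥ x) • vb M i) ⬝ᵥ x := by
    rw [vb_expand]; exact (dot_self_eq_qs x).symm
  rw [h]
  simp only [dotProduct, Finset.sum_apply, Pi.smul_apply, smul_eq_mul, Finset.sum_mul]
  rw [Finset.sum_comm]
  apply Finset.sum_congr rfl
  intro i _
  rw [sq, Finset.mul_sum]
  apply Finset.sum_congr rfl
  intro k _
  rw [Finset.sum_mul]
  apply Finset.sum_congr rfl
  intro l _
  ring

lemma nuclearNorm_eq (M : Matrix (Fin m₁) (Fin m₂) ℝ) :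
    nuclearNorm M = ∑ i, Real.sqrt (ev M i) := rfl

lemma nuclearNorm_nonneg (M : Matrix (Fin m₁) (Fin m₂) ℝ) : 0 ≤ nuclearNorm M :=
  Finset.sum_nonneg fun _ _ => Real.sqrt_nonneg _

lemma mip_decomp (W M : Matrix (Fin m₁) (Fin m₂) ℝ) :
    mip W M = ∑ i, (M *ᵥ vb M i) ⬝ᵥ (W *ᵥ vb M i) := by
  have hM : ∀ j k, M j k = ∑ i, (vb M i k) * (M *ᵥ vb M i) j := by
    intro j k
    have h : (M *ᵥ ∑ i, (vb M i ⬝ᵥ Pi.single k 1) • vb M i) j = (M *ᵥ Pi.single k 1) j :=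
      congrArg (fun z => (M *ᵥ z) j) (vb_expand M (Pi.single k 1))
    rw [Matrix.mulVec_single] at h
    have hl : (M *ᵥ ∑ i, (vb M i ⬝ᵥ Pi.single k 1) • vb M i) j
        = ∑ i, (vb M i k) * (M *ᵥ vb M i) j := by
      rw [← Matrix.mulVecLin_apply, map_sum]
      simp [Matrix.mulVecLin_apply, dotProduct_single]
    rw [hl] at h
    simpa using h.symm
  rw [mip_eq]
  have step : ∀ j, ∑ k, W j k * M j k = ∑ i, (M *ᵥ vb M i) j * (W *ᵥ vb M i) j := by
    intro j
    calc ∑ k, W j k * M j k = ∑ k, ∑ i, W j k * ((vb M i k) * (M *ᵥ vb M i) j) := by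
          apply Finset.sum_congr rfl; intro k _; rw [hM j k, Finset.mul_sum]
      _ = ∑ i, ∑ k, W j k * ((vb M i k) * (M *ᵥ vb M i) j) := Finset.sum_comm
      _ = ∑ i, (M *ᵥ vb M i) j * (W *ᵥ vb M i) j := by
          apply Finset.sum_congr rfl; intro i _
          simp only [Matrix.mulVec, dotProduct]
          conv_rhs => rw [Finset.mul_sum]
          apply Finset.sum_congr rfl; intro k _; ring
  rw [Finset.sum_congr rfl (fun j _ => step j), Finset.sum_comm]
  apply Finset.sum_congr rfl
  intro i _
  rw [dotProduct]

lemma mip_le_c_mul_nuclear (W M : Matrix (Fin m₁) (Fin m₂) ℝ) (c : ℝ)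
    (h : ∀ x, Real.sqrt (qs (W *ᵥ x)) ≤ c * Real.sqrt (qs x)) :
    mip W M ≤ c * nuclearNorm M := by
  rw [mip_decomp, nuclearNorm_eq, Finset.mul_sum]
  apply Finset.sum_le_sum
  intro i _
  calc (M *ᵥ vb M i) ⬝ᵥ (W *ᵥ vb M i)
      ≤ Real.sqrt (qs (M *ᵥ vb M i)) * Real.sqrt (qs (W *ᵥ vb M i)) := dot_le _ _
    _ ≤ Real.sqrt (ev M i) * (c * Real.sqrt (qs (vb M i))) := by
        rw [qs_mulVec_vb]
        exact mul_le_mul_of_nonneg_left (h _) (Real.sqrt_nonneg _)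
    _ = c * Real.sqrt (ev M i) := by rw [qs_vb]; simp [Real.sqrt_one]; ring

/-! ### dual witness -/

lemma vecMulVec_mulVec {m₃ : ℕ} (u : Fin m₁ → ℝ) (w x : Fin m₃ → ℝ) :
    Matrix.vecMulVec u w *ᵥ x = (w ⬝ᵥ x) • u := by
  funext j
  simp only [Matrix.mulVec, Matrix.vecMulVec_apply, dotProduct, Pi.smul_apply,
    smul_eq_mul, Finset.sum_mul]
  apply Finset.sum_congr rfl
  intro k _
  ring

lemma vecMulVec_mul {m₃ m₄ : ℕ} (u : Fin m₁ → ℝ) (w : Fin m₃ → ℝ)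
    (R : Matrix (Fin m₃) (Fin m₄) ℝ) :
    Matrix.vecMulVec u w * R = Matrix.vecMulVec u (Rᵀ *ᵥ w) := by
  ext j k
  simp only [Matrix.mul_apply, Matrix.vecMulVec_apply, Matrix.mulVec, dotProduct,
    Matrix.transpose_apply, Finset.mul_sum]
  apply Finset.sum_congr rfl
  intro l _
  ring

lemma dot_sum_sum (M : Matrix (Fin m₁) (Fin m₂) ℝ) (a b : Fin m₂ → ℝ) :
    (∑ i, a i • vb M i) ⬝ᵥ (∑ i, b i • vb M i) = ∑ i, a i * b i := by
  simp only [dotProduct, Finset.sum_apply, Pi.smul_apply, smul_eq_mul]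
  have h1 : ∀ k, (∑ i, a i * vb M i k) * (∑ j, b j * vb M j k)
      = ∑ i, ∑ j, (a i * vb M i k) * (b j * vb M j k) := by
    intro k; rw [Finset.sum_mul_sum]
  rw [Finset.sum_congr rfl (fun k _ => h1 k), Finset.sum_comm]
  apply Finset.sum_congr rfl
  intro i _
  rw [Finset.sum_comm]
  have hj : ∀ j, ∑ k, (a i * vb M i k) * (b j * vb M j k)
      = a i * b j * (vb M i ⬝ᵥ vb M j) := by
    intro j; rw [dotProduct, Finset.mul_sum]
    apply Finset.sum_congr rfl; intro k _; ring
  rw [Finset.sum_congr rfl (fun j _ => hj j)]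
  simp [vb_dot]

noncomputable def evf (M : Matrix (Fin m₁) (Fin m₂) ℝ) (i : Fin m₂) : ℝ :=
  if 0 < ev M i then (Real.sqrt (ev M i))⁻¹ else 0

noncomputable def dualS (M : Matrix (Fin m₁) (Fin m₂) ℝ) : Matrix (Fin m₂) (Fin m₂) ℝ :=
  ∑ i, evf M i • Matrix.vecMulVec (vb M i) (vb M i)

noncomputable def dualW (M : Matrix (Fin m₁) (Fin m₂) ℝ) : Matrix (Fin m₁) (Fin m₂) ℝ :=
  M * dualS M

lemma sum_mulVec {m₃ m₄ : ℕ} {ι : Type*} (s : Finset ι) (A : ι → Matrix (Fin m₃) (Fin m₄) ℝ)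
    (x : Fin m₄ → ℝ) : (∑ i ∈ s, A i) *ᵥ x = ∑ i ∈ s, A i *ᵥ x := by
  induction s using Finset.cons_induction with
  | empty => simp
  | cons a s ha ih => rw [Finset.sum_cons, Finset.sum_cons, Matrix.add_mulVec, ih]

lemma dualS_mulVec (M : Matrix (Fin m₁) (Fin m₂) ℝ) (x : Fin m₂ → ℝ) :
    dualS M *ᵥ x = ∑ i, (evf M i * (vb M i ⬝ᵥ x)) • vb M i := by
  rw [dualS, sum_mulVec]
  apply Finset.sum_congr rfl
  intro i _
  rw [Matrix.smul_mulVec, vecMulVec_mulVec, smul_smul]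

lemma mip_dualW (M : Matrix (Fin m₁) (Fin m₂) ℝ) :
    mip (dualW M) M = nuclearNorm M := by
  rw [dualW, mip_mul_left, dualS, mip_sum_left, nuclearNorm_eq]
  apply Finset.sum_congr rfl
  intro i _
  have h1 : mip (evf M i • Matrix.vecMulVec (vb M i) (vb M i)) (Mᵀ * M)
      = evf M i * (vb M i ⬝ᵥ ((Mᵀ * M) *ᵥ vb M i)) := by
    rw [mip_smul_left]
    congr 1
    rw [mip_eq, dotProduct]
    apply Finset.sum_congr rfl
    intro j _
    simp only [Matrix.vecMulVec_apply, Matrix.mulVec, dotProduct, Finset.mul_sum]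
    apply Finset.sum_congr rfl
    intro k _
    ring
  rw [h1, transpose_eq_conjTranspose, vb_mulVec, dotProduct_smul, smul_eq_mul,
    vb_dot]
  simp only [if_pos rfl, mul_one]
  rw [evf]
  by_cases h : 0 < ev M i
  · rw [if_pos h]
    have hs : Real.sqrt (ev M i) * Real.sqrt (ev M i) = ev M i :=
      Real.mul_self_sqrt h.le
    have hp : (0:ℝ) < Real.sqrt (ev M i) := Real.sqrt_pos.mpr h
    field_simp
    simp [Real.sq_sqrt h.le]
  · rw [if_neg h]
    have : ev M i = 0 := le_antisymm (not_lt.mp h) (ev_nonneg M i)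
    simp [this]

lemma qs_dualW_mulVec_le (M : Matrix (Fin m₁) (Fin m₂) ℝ) (x : Fin m₂ → ℝ) :
    qs (dualW M *ᵥ x) ≤ qs x := by
  rw [dualW, ← Matrix.mulVec_mulVec, qs_mulVec_eq, dualS_mulVec]
  have hG : (Mᴴ * M) *ᵥ (∑ i, (evf M i * (vb M i ⬝ᵥ x)) • vb M i)
      = ∑ i, (evf M i * (vb M i ⬝ᵥ x) * ev M i) • vb M i := by
    rw [← Matrix.mulVecLin_apply, map_sum]
    apply Finset.sum_congr rfl
    intro i _
    rw [_root_.map_smul, Matrix.mulVecLin_apply, vb_mulVec, smul_smul]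
  rw [hG]
  have hdot : (∑ i, (evf M i * (vb M i ⬝ᵥ x)) • vb M i) ⬝ᵥ
      (∑ i, (evf M i * (vb M i ⬝ᵥ x) * ev M i) • vb M i)
      = ∑ i, evf M i ^ 2 * ev M i * (vb M i ⬝ᵥ x) ^ 2 := by
    rw [dot_sum_sum]
    apply Finset.sum_congr rfl
    intro i _
    ring
  rw [hdot, ← parseval M x]
  apply Finset.sum_le_sum
  intro i _
  have hb : evf M i ^ 2 * ev M i ≤ 1 := by
    rw [evf]
    by_cases h : 0 < ev M i
    · rw [if_pos h]
      have hs : Real.sqrt (ev M i) * Real.sqrt (ev M i) = ev M i :=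
        Real.mul_self_sqrt h.le
      have hp : (0:ℝ) < Real.sqrt (ev M i) := Real.sqrt_pos.mpr h
      have : (Real.sqrt (ev M i))⁻¹ ^ 2 * ev M i = 1 := by
        field_simp
        rw [Real.sq_sqrt h.le]
      exact this.le
    · rw [if_neg h]; simp
  nlinarith [sq_nonneg (vb M i ⬝ᵥ x)]

lemma dualS_mul_self {M : Matrix (Fin m₁) (Fin m₂) ℝ} {R : Matrix (Fin m₂) (Fin m₂) ℝ}
    (hR : (Mᴴ * M) * R = Mᴴ * M) : dualS M * R = dualS M := by
  have hGt : (Mᴴ * M)ᵀ = Mᴴ * M := by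
    rw [transpose_eq_conjTranspose]
    exact (hermT M).eq
  have hRG : Rᵀ * (Mᴴ * M) = Mᴴ * M := by
    have := congrArg Matrix.transpose hR
    rw [Matrix.transpose_mul, hGt] at this
    exact this
  have hRv : ∀ i, 0 < ev M i → Rᵀ *ᵥ vb M i = vb M i := by
    intro i hi
    have h1 : Rᵀ *ᵥ ((Mᴴ * M) *ᵥ vb M i) = (Mᴴ * M) *ᵥ vb M i := by
      rw [Matrix.mulVec_mulVec, hRG]
    rw [vb_mulVec, Matrix.mulVec_smul] at h1
    have h2 := congrArg (fun z => (ev M i)⁻¹ • z) h1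
    simpa [smul_smul, inv_mul_cancel₀ hi.ne'] using h2
  rw [dualS, Finset.sum_mul]
  apply Finset.sum_congr rfl
  intro i _
  rw [Matrix.smul_mul, vecMulVec_mul]
  by_cases hi : 0 < ev M i
  · rw [hRv i hi]
  · have : evf M i = 0 := by rw [evf, if_neg hi]
    rw [this, zero_smul, zero_smul]

lemma dualS_mul_zero {M : Matrix (Fin m₁) (Fin m₂) ℝ} {R : Matrix (Fin m₂) (Fin m₂) ℝ}
    (hR : (Mᴴ * M) * R = 0) : dualS M * R = 0 := by
  have hGt : (Mᴴ * M)ᵀ = Mᴴ * M := by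
    rw [transpose_eq_conjTranspose]
    exact (hermT M).eq
  have hRG : Rᵀ * (Mᴴ * M) = 0 := by
    have := congrArg Matrix.transpose hR
    rw [Matrix.transpose_mul, hGt, Matrix.transpose_zero] at this
    exact this
  have hRv : ∀ i, 0 < ev M i → Rᵀ *ᵥ vb M i = 0 := by
    intro i hi
    have h1 : Rᵀ *ᵥ ((Mᴴ * M) *ᵥ vb M i) = 0 := by
      rw [Matrix.mulVec_mulVec, hRG, Matrix.zero_mulVec]
    rw [vb_mulVec, Matrix.mulVec_smul] at h1
    have h2 := congrArg (fun z => (ev M i)⁻¹ • z) h1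
    simpa [smul_smul, inv_mul_cancel₀ hi.ne'] using h2
  rw [dualS, Finset.sum_mul]
  apply Finset.sum_eq_zero
  intro i _
  rw [Matrix.smul_mul, vecMulVec_mul]
  by_cases hi : 0 < ev M i
  · rw [hRv i hi]
    have : Matrix.vecMulVec (vb M i) (0 : Fin m₂ → ℝ) = 0 := by
      ext j k; simp [Matrix.vecMulVec_apply]
    rw [this, smul_zero]
  · have : evf M i = 0 := by rw [evf, if_neg hi]
    rw [this, zero_smul]

/-- If `P *ᵥ (A *ᵥ x) = 0` for all `x`, then `P * A = 0`. -/
lemma mul_eq_zero_of_mulVec {m₃ : ℕ} {P : Matrix (Fin m₁) (Fin m₁) ℝ}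
    {A : Matrix (Fin m₁) (Fin m₃) ℝ}
    (h : ∀ x, P *ᵥ (A *ᵥ x) = 0) : P * A = 0 := by
  ext j k
  have := congrArg (fun z => z j) (h (Pi.single k 1))
  simp only [Matrix.mulVec_mulVec] at this
  rw [Matrix.mulVec_single] at this
  simpa using this

lemma mip_add_left (A B C : Matrix (Fin m₁) (Fin m₂) ℝ) :
    mip (A + B) C = mip A C + mip B C := by
  simp [mip_eq, add_mul, Finset.sum_add_distrib]

lemma qs_neg {m : ℕ} (x : Fin m → ℝ) : qs (-x) = qs x := by
  simp [qs]

lemma qs_add_of_dot_zero {m : ℕ} (a b : Fin m → ℝ) (h : a ⬝ᵥ b = 0) :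
    qs (a + b) = qs a + qs b := by
  rw [← dot_self_eq_qs, ← dot_self_eq_qs, ← dot_self_eq_qs,
    add_dotProduct, dotProduct_add, dotProduct_add,
    h, dotProduct_comm b a, h]
  ring

end ConeAux

set_option maxHeartbeats 1000000 in
open ConeAux in
/-- Cone condition for the square-root estimator: if Q(A₀) > 0 and
λ > 3‖Σ‖/Q(A₀), then ‖P_{A₀}^⊥(Δ)‖₁ ≤ 2‖P_{A₀}(Δ)‖₁ where Δ = Â_SQ − A₀. -/
theorem cone_condition_sqrt {m₁ m₂ n : ℕ} (hn : 0 < n)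
    (X : Fin n → Matrix (Fin m₁) (Fin m₂) ℝ) (ξ : Fin n → ℝ) (σ lam a : ℝ)
    (hσ : 0 < σ)
    (A₀ Asq : Matrix (Fin m₁) (Fin m₂) ℝ)
    (hA₀ : ∀ j k, |A₀ j k| ≤ a) (hAsq : ∀ j k, |Asq j k| ≤ a)
    (Y : Fin n → ℝ) (hY : ∀ i, Y i = mip (X i) A₀ + σ * ξ i)
    (Q : Matrix (Fin m₁) (Fin m₂) ℝ → ℝ)
    (hQ : ∀ A, Q A = Real.sqrt ((1 / n : ℝ) * ∑ i, (Y i - mip (X i) A) ^ 2))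
    (hQ₀ : 0 < Q A₀)
    (hmin : ∀ A : Matrix (Fin m₁) (Fin m₂) ℝ, (∀ j k, |A j k| ≤ a) →
      Q Asq + lam * nuclearNorm Asq ≤ Q A + lam * nuclearNorm A)
    (hlam : lam > 3 * opNorm ((σ / n) • ∑ i, ξ i • X i) / Q A₀)
    (P₁ : Matrix (Fin m₁) (Fin m₁) ℝ) (P₂ : Matrix (Fin m₂) (Fin m₂) ℝ)
    (hP₁s : P₁ᵀ = P₁) (hP₁i : P₁ * P₁ = P₁)
    (hP₁r : LinearMap.range (Matrix.mulVecLin (1 - P₁)) =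
      LinearMap.range (Matrix.mulVecLin A₀))
    (hP₂s : P₂ᵀ = P₂) (hP₂i : P₂ * P₂ = P₂)
    (hP₂r : LinearMap.range (Matrix.mulVecLin (1 - P₂)) =
      LinearMap.range (Matrix.mulVecLin A₀ᵀ)) :
    nuclearNorm (P₁ * (Asq - A₀) * P₂) ≤
      2 * nuclearNorm ((Asq - A₀) - P₁ * (Asq - A₀) * P₂) := by
  classical
  set Δ : Matrix (Fin m₁) (Fin m₂) ℝ := Asq - A₀ with hΔdef
  set B : Matrix (Fin m₁) (Fin m₂) ℝ := P₁ * Δ * P₂ with hBdef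
  set C : Matrix (Fin m₁) (Fin m₂) ℝ := Δ - B with hCdef
  set Sn : Matrix (Fin m₁) (Fin m₂) ℝ := (σ / n) • ∑ i, ξ i • X i with hSndef
  -- basic projection facts
  have hP₁A₀ : P₁ * A₀ = 0 := by
    apply mul_eq_zero_of_mulVec
    intro x
    have hx : A₀ *ᵥ x ∈ LinearMap.range (Matrix.mulVecLin (1 - P₁)) := by
      rw [hP₁r]; exact ⟨x, rfl⟩
    obtain ⟨y, hy⟩ := hx
    rw [← hy, Matrix.mulVecLin_apply, Matrix.mulVec_mulVec]
    have : P₁ * (1 - P₁) = 0 := by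
      rw [Matrix.mul_sub, Matrix.mul_one, hP₁i, sub_self]
    rw [this, Matrix.zero_mulVec]
  have hP₂A₀t : P₂ * A₀ᵀ = 0 := by
    apply mul_eq_zero_of_mulVec
    intro x
    have hx : A₀ᵀ *ᵥ x ∈ LinearMap.range (Matrix.mulVecLin (1 - P₂)) := by
      rw [hP₂r]; exact ⟨x, rfl⟩
    obtain ⟨y, hy⟩ := hx
    rw [← hy, Matrix.mulVecLin_apply, Matrix.mulVec_mulVec]
    have : P₂ * (1 - P₂) = 0 := by
      rw [Matrix.mul_sub, Matrix.mul_one, hP₂i, sub_self]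
    rw [this, Matrix.zero_mulVec]
  have hA₀P₂ : A₀ * P₂ = 0 := by
    have := congrArg Matrix.transpose hP₂A₀t
    rw [Matrix.transpose_mul, Matrix.transpose_transpose, hP₂s, Matrix.transpose_zero] at this
    exact this
  have hBP₂ : B * P₂ = B := by
    rw [hBdef, Matrix.mul_assoc (P₁ * Δ), hP₂i]
  have hA₀tB : A₀ᵀ * B = 0 := by
    have h1 : A₀ᵀ * P₁ = 0 := by
      have := congrArg Matrix.transpose hP₁A₀
      rw [Matrix.transpose_mul, hP₁s, Matrix.transpose_zero] at this
      exact this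
    rw [hBdef, ← Matrix.mul_assoc, ← Matrix.mul_assoc, h1, Matrix.zero_mul, Matrix.zero_mul]
  have hBtA₀ : Bᵀ * A₀ = 0 := by
    rw [hBdef, Matrix.transpose_mul, Matrix.transpose_mul, hP₁s, hP₂s,
      Matrix.mul_assoc, Matrix.mul_assoc, hP₁A₀, Matrix.mul_zero, Matrix.mul_zero]
  -- nuclear norm facts
  have hNB : 0 ≤ nuclearNorm B := nuclearNorm_nonneg B
  have hNC : 0 ≤ nuclearNorm C := nuclearNorm_nonneg C
  have hqs1 : ∀ (M : Matrix (Fin m₁) (Fin m₂) ℝ) (x : Fin m₂ → ℝ),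
      Real.sqrt (qs (dualW M *ᵥ x)) ≤ 1 * Real.sqrt (qs x) := by
    intro M x
    rw [one_mul]
    exact Real.sqrt_le_sqrt (qs_dualW_mulVec_le M x)
  -- triangle inequality
  have hBC : B + C = Δ := by rw [hCdef]; abel
  have hNtri : nuclearNorm Δ ≤ nuclearNorm B + nuclearNorm C := by
    rw [← hBC]
    calc nuclearNorm (B + C) = mip (dualW (B + C)) (B + C) := (mip_dualW (B + C)).symm
      _ = mip (dualW (B + C)) B + mip (dualW (B + C)) C := mip_add_right _ _ _
      _ ≤ 1 * nuclearNorm B + 1 * nuclearNorm C :=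
          add_le_add (mip_le_c_mul_nuclear _ _ _ (hqs1 _)) (mip_le_c_mul_nuclear _ _ _ (hqs1 _))
      _ = nuclearNorm B + nuclearNorm C := by ring
  -- decomposability
  have hW₀P₂ : dualW A₀ * P₂ = 0 := by
    have hG0 : (A₀ᴴ * A₀) * P₂ = 0 := by
      rw [Matrix.mul_assoc, hA₀P₂, Matrix.mul_zero]
    rw [dualW, Matrix.mul_assoc, dualS_mul_zero hG0, Matrix.mul_zero]
  have hWBP₂ : dualW B * P₂ = dualW B := by
    have hGB : (Bᴴ * B) * P₂ = Bᴴ * B := by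
      rw [Matrix.mul_assoc, hBP₂]
    rw [dualW, Matrix.mul_assoc, dualS_mul_self hGB]
  have hcross : (dualW A₀)ᵀ * dualW B = 0 := by
    rw [dualW, dualW, Matrix.transpose_mul]
    have h1 : A₀ᵀ * (B * dualS B) = 0 := by
      rw [← Matrix.mul_assoc, hA₀tB, Matrix.zero_mul]
    rw [Matrix.mul_assoc, h1, Matrix.mul_zero]
  have hqsW : ∀ x, qs ((dualW A₀ + dualW B) *ᵥ x) ≤ qs x := by
    intro x
    set y : Fin m₂ → ℝ := x - P₂ *ᵥ x with hydef
    set z : Fin m₂ → ℝ := P₂ *ᵥ x with hzdef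
    have hyz : y + z = x := by rw [hydef, hzdef]; abel
    have hW₀x : dualW A₀ *ᵥ x = dualW A₀ *ᵥ y := by
      have h0 : dualW A₀ *ᵥ z = 0 := by
        rw [hzdef, Matrix.mulVec_mulVec, hW₀P₂, Matrix.zero_mulVec]
      have := congrArg (fun v => dualW A₀ *ᵥ v) hyz
      simp only [Matrix.mulVec_add, h0, add_zero] at this
      exact this.symm
    have hWBx : dualW B *ᵥ x = dualW B *ᵥ z := by
      rw [hzdef, Matrix.mulVec_mulVec, hWBP₂]
    have hdotc : (dualW A₀ *ᵥ y) ⬝ᵥ (dualW B *ᵥ z) = 0 := by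
      rw [Matrix.dotProduct_mulVec, Matrix.vecMul_mulVec, hcross, Matrix.vecMul_zero,
        zero_dotProduct]
    have hyzdot : y ⬝ᵥ z = 0 := by
      rw [hydef, hzdef, sub_dotProduct]
      have h1 : (P₂ *ᵥ x) ⬝ᵥ (P₂ *ᵥ x) = x ⬝ᵥ (P₂ *ᵥ x) := by
        rw [Matrix.dotProduct_mulVec x, Matrix.dotProduct_mulVec (P₂ *ᵥ x),
          Matrix.vecMul_mulVec, hP₂s, hP₂i]
      rw [h1, sub_self]
    have hpyth : qs y + qs z = qs x := by
      rw [← hyz, qs_add_of_dot_zero y z hyzdot]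
    calc qs ((dualW A₀ + dualW B) *ᵥ x)
        = qs (dualW A₀ *ᵥ y + dualW B *ᵥ z) := by
          rw [Matrix.add_mulVec, hW₀x, hWBx]
      _ = qs (dualW A₀ *ᵥ y) + qs (dualW B *ᵥ z) := qs_add_of_dot_zero _ _ hdotc
      _ ≤ qs y + qs z := add_le_add (qs_dualW_mulVec_le A₀ y) (qs_dualW_mulVec_le B z)
      _ = qs x := hpyth
  have hqsW' : ∀ x, Real.sqrt (qs ((dualW A₀ + dualW B) *ᵥ x)) ≤ 1 * Real.sqrt (qs x) := by
    intro x
    rw [one_mul]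
    exact Real.sqrt_le_sqrt (hqsW x)
  have hqsWn : ∀ x, Real.sqrt (qs ((-(dualW A₀ + dualW B)) *ᵥ x)) ≤ 1 * Real.sqrt (qs x) := by
    intro x
    rw [Matrix.neg_mulVec, qs_neg]
    exact hqsW' x
  have hmipWC : - nuclearNorm C ≤ mip (dualW A₀ + dualW B) C := by
    have h1 := mip_le_c_mul_nuclear (-(dualW A₀ + dualW B)) C 1 hqsWn
    rw [mip_neg_left, one_mul] at h1
    linarith
  have hW₀B : mip (dualW A₀) B = 0 := by
    rw [dualW, mip_mul_left, hA₀tB, mip_zero_right]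
  have hWBA₀ : mip (dualW B) A₀ = 0 := by
    rw [dualW, mip_mul_left, hBtA₀, mip_zero_right]
  have hAsqsum : Asq = A₀ + B + C := by
    rw [hCdef, hΔdef]; abel
  have hdecomp : nuclearNorm A₀ + nuclearNorm B - nuclearNorm C ≤ nuclearNorm Asq := by
    have h1 : mip (dualW A₀ + dualW B) Asq ≤ 1 * nuclearNorm Asq :=
      mip_le_c_mul_nuclear _ _ _ hqsW'
    have h2 : mip (dualW A₀ + dualW B) Asq
        = mip (dualW A₀) A₀ + mip (dualW B) A₀ + (mip (dualW A₀) B + mip (dualW B) B)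
          + mip (dualW A₀ + dualW B) C := by
      rw [hAsqsum, mip_add_right, mip_add_right, mip_add_left, mip_add_left]
    rw [mip_dualW A₀, mip_dualW B, hW₀B, hWBA₀] at h2
    rw [one_mul] at h1
    linarith [hmipWC, h1, h2.symm.le, h2.le]
  -- the square-root-estimator gradient inequality
  have ha : ∀ i, Y i - mip (X i) A₀ = σ * ξ i := by
    intro i; rw [hY i]; ring
  have hti : ∀ i, Y i - mip (X i) Asq = σ * ξ i - mip (X i) Δ := by
    intro i
    rw [hΔdef, mip_sub_right, hY i]; ring
  have hnn : (0:ℝ) < (n:ℝ) := by exact_mod_cast hn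
  have hQ0sq : Q A₀ ^ 2 = (1 / n : ℝ) * ∑ i, (σ * ξ i) ^ 2 := by
    rw [hQ A₀]
    rw [Real.sq_sqrt (by positivity)]
    apply congrArg
    apply Finset.sum_congr rfl
    intro i _
    rw [ha i]
  have hQAsq : Q Asq = Real.sqrt ((1 / n : ℝ) * ∑ i, (σ * ξ i - mip (X i) Δ) ^ 2) := by
    rw [hQ Asq]
    congr 1
    apply congrArg
    apply Finset.sum_congr rfl
    intro i _
    rw [hti i]
  have hmipSn : mip Sn Δ = (1 / n : ℝ) * ∑ i, (σ * ξ i) * mip (X i) Δ := by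
    rw [hSndef, mip_smul_left, mip_sum_left]
    rw [Finset.mul_sum, Finset.mul_sum]
    apply Finset.sum_congr rfl
    intro i _
    rw [mip_smul_left]
    ring
  have hCS : (1 / n : ℝ) * ∑ i, (σ * ξ i) * (σ * ξ i - mip (X i) Δ) ≤ Q A₀ * Q Asq := by
    have h1 : (fun i => σ * ξ i) ⬝ᵥ (fun i => σ * ξ i - mip (X i) Δ)
        ≤ Real.sqrt (qs (fun i => σ * ξ i)) * Real.sqrt (qs (fun i => σ * ξ i - mip (X i) Δ)) :=
      dot_le _ _
    have hn' : (0:ℝ) ≤ 1 / n := by positivity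
    have hd : (fun i => σ * ξ i) ⬝ᵥ (fun i => σ * ξ i - mip (X i) Δ)
        = ∑ i, (σ * ξ i) * (σ * ξ i - mip (X i) Δ) := rfl
    have e1 : Q A₀ = Real.sqrt ((1 / n : ℝ) * qs (fun i => σ * ξ i)) := by
      rw [hQ A₀]
      congr 1
      apply congrArg
      apply Finset.sum_congr rfl
      intro i _
      rw [ha i]
    have e2 : Q Asq = Real.sqrt ((1 / n : ℝ) * qs (fun i => σ * ξ i - mip (X i) Δ)) := by
      rw [hQAsq]; rfl
    calc (1 / n : ℝ) * ∑ i, (σ * ξ i) * (σ * ξ i - mip (X i) Δ)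
        ≤ (1 / n : ℝ) * (Real.sqrt (qs (fun i => σ * ξ i))
            * Real.sqrt (qs (fun i => σ * ξ i - mip (X i) Δ))) := by
          rw [← hd]; exact mul_le_mul_of_nonneg_left h1 hn'
      _ = (Real.sqrt (1 / n) * Real.sqrt (qs (fun i => σ * ξ i)))
            * (Real.sqrt (1 / n) * Real.sqrt (qs (fun i => σ * ξ i - mip (X i) Δ))) := by
          have hsn : (1 / n : ℝ) = Real.sqrt (1 / n) * Real.sqrt (1 / n) :=
            (Real.mul_self_sqrt hn').symm
          conv_lhs => rw [hsn]
          ring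
      _ = Q A₀ * Q Asq := by
          rw [e1, e2, Real.sqrt_mul hn', Real.sqrt_mul hn']
  have hgrad : Q A₀ * (Q A₀ - Q Asq) ≤ mip Sn Δ := by
    have hexp : (1 / n : ℝ) * ∑ i, (σ * ξ i) * (σ * ξ i - mip (X i) Δ)
        = Q A₀ ^ 2 - mip Sn Δ := by
      rw [hQ0sq, hmipSn, ← mul_sub, ← Finset.sum_sub_distrib]
      congr 1
      apply Finset.sum_congr rfl
      intro i _
      ring
    rw [hexp] at hCS
    nlinarith [hCS]

  -- putting it all together
  have hmipSnB : mip Sn Δ ≤ opNorm Sn * nuclearNorm Δ := by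
    apply mip_le_c_mul_nuclear
    intro x
    exact qs_mulVec_le Sn x
  have hop : 0 ≤ opNorm Sn := opNorm_nonneg Sn
  have hmin' := hmin A₀ hA₀
  have hlamQ : 3 * opNorm Sn < lam * Q A₀ := by
    rw [gt_iff_lt, div_lt_iff₀ hQ₀] at hlam
    linarith [hlam]
  have hlam0 : 0 < lam := by
    by_contra h
    push_neg at h
    nlinarith [hop, hQ₀, hlamQ]
  -- chain of inequalities, multiplied through by Q A₀ > 0
  have key : lam * Q A₀ * (nuclearNorm B - nuclearNorm C) ≤ opNorm Sn * (nuclearNorm B + nuclearNorm C) := by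
    have s1 : lam * (nuclearNorm Asq - nuclearNorm A₀) ≤ Q A₀ - Q Asq := by linarith [hmin']
    have s2 : Q A₀ * (lam * (nuclearNorm Asq - nuclearNorm A₀)) ≤ Q A₀ * (Q A₀ - Q Asq) :=
      mul_le_mul_of_nonneg_left s1 hQ₀.le
    have s3 : mip Sn Δ ≤ opNorm Sn * (nuclearNorm B + nuclearNorm C) := by
      calc mip Sn Δ ≤ opNorm Sn * nuclearNorm Δ := hmipSnB
        _ ≤ opNorm Sn * (nuclearNorm B + nuclearNorm C) :=
            mul_le_mul_of_nonneg_left hNtri hop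
    have s4 : nuclearNorm B - nuclearNorm C ≤ nuclearNorm Asq - nuclearNorm A₀ := by
      linarith [hdecomp]
    nlinarith [s2, s3, s4, hgrad, mul_le_mul_of_nonneg_left s4 (mul_pos hlam0 hQ₀).le]
  have key2 : opNorm Sn * (nuclearNorm B + nuclearNorm C)
      ≤ (lam * Q A₀ / 3) * (nuclearNorm B + nuclearNorm C) := by
    apply mul_le_mul_of_nonneg_right _ (by linarith [hNB, hNC])
    linarith [hlamQ]
  have hpos : 0 < lam * Q A₀ := mul_pos hlam0 hQ₀
  have key3 : lam * Q A₀ * (nuclearNorm B - nuclearNorm C)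
      ≤ lam * Q A₀ * ((nuclearNorm B + nuclearNorm C) / 3) := by
    have e : (lam * Q A₀ / 3) * (nuclearNorm B + nuclearNorm C)
        = lam * Q A₀ * ((nuclearNorm B + nuclearNorm C) / 3) := by ring
    calc lam * Q A₀ * (nuclearNorm B - nuclearNorm C)
        ≤ opNorm Sn * (nuclearNorm B + nuclearNorm C) := key
      _ ≤ (lam * Q A₀ / 3) * (nuclearNorm B + nuclearNorm C) := key2
      _ = lam * Q A₀ * ((nuclearNorm B + nuclearNorm C) / 3) := e
  have key4 : nuclearNorm B - nuclearNorm C ≤ (nuclearNorm B + nuclearNorm C) / 3 :=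
    le_of_mul_le_mul_left key3 hpos
  linarith [key4]
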